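/- Let f, g : ℝⁿ → ℝ be quadratic forms. Then the set {(f(x), g(x)) : x ∈ ℝⁿ} ⊆ ℝ² is convex. -/

import Mathlib

noncomputable def qf {n : ℕ} (A : Matrix (Fin n) (Fin n) ℝ) (x : Fin n → ℝ) : ℝ :=
  dotProduct x (A.mulVec x)

lemma qf_smul {n : ℕ} (A : Matrix (Fin n) (Fin n) ℝ) (s : ℝ) (x : Fin n → ℝ) :
    qf A (s • x) = s^2 * qf A x := by
  simp [qf, Matrix.mulVec_smul, smul_dotProduct, dotProduct_smul, smul_eq_mul]
  ring

lemma qf_lin {n : ℕ} (A B : Matrix (Fin n) (Fin n) ℝ) (c d : ℝ) (x : Fin n → ℝ) :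
    qf (c • A + d • B) x = c * qf A x + d * qf B x := by
  simp [qf, Matrix.add_mulVec, Matrix.smul_mulVec, dotProduct_add,
    dotProduct_smul, smul_eq_mul]

lemma qf_expand {n : ℕ} (A : Matrix (Fin n) (Fin n) ℝ) (c s : ℝ) (x y : Fin n → ℝ) :
    qf A (c • x + s • y) = c^2 * qf A x
      + c*s*(dotProduct x (A.mulVec y) + dotProduct y (A.mulVec x))
      + s^2 * qf A y := by
  simp [qf, Matrix.mulVec_add, Matrix.mulVec_smul, dotProduct_add,
    add_dotProduct, smul_dotProduct, dotProduct_smul, smul_eq_mul]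
  ring

lemma qf_continuous {n : ℕ} (A : Matrix (Fin n) (Fin n) ℝ) :
    Continuous fun v : Fin n → ℝ => qf A v := by
  simp only [qf, dotProduct, Matrix.mulVec]
  fun_prop

-- core, case b = 0
lemma core_zero {n : ℕ} (A B : Matrix (Fin n) (Fin n) ℝ) (x y : Fin n → ℝ) (r : ℝ)
    (hbx : qf B x = 0) (hby : qf B y = 0)
    (hr : r ∈ Set.uIcc (qf A x) (qf A y)) :
    ∃ z, qf A z = r ∧ qf B z = 0 := by
  rw [Set.mem_uIcc] at hr
  rcases lt_trichotomy r 0 with h0 | h0 | h0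
  · -- r < 0 : use the smaller endpoint, which is negative
    rcases hr with ⟨h1, h2⟩ | ⟨h1, h2⟩
    · have hax : qf A x < 0 := lt_of_le_of_lt h1 h0
      refine ⟨Real.sqrt (r / qf A x) • x, ?_, ?_⟩
      · rw [qf_smul, Real.sq_sqrt (by rw [div_nonneg_iff]; right; exact ⟨h0.le, hax.le⟩ : (0:ℝ) ≤ r / qf A x)]
        exact div_mul_cancel₀ r hax.ne
      · rw [qf_smul, hbx, mul_zero]
    · have hax : qf A y < 0 := lt_of_le_of_lt h1 h0
      refine ⟨Real.sqrt (r / qf A y) • y, ?_, ?_⟩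
      · rw [qf_smul, Real.sq_sqrt (by rw [div_nonneg_iff]; right; exact ⟨h0.le, hax.le⟩ : (0:ℝ) ≤ r / qf A y)]
        exact div_mul_cancel₀ r hax.ne
      · rw [qf_smul, hby, mul_zero]
  · exact ⟨0, by simp [qf, h0]⟩
  · rcases hr with ⟨h1, h2⟩ | ⟨h1, h2⟩
    · have hax : 0 < qf A y := lt_of_lt_of_le h0 h2
      refine ⟨Real.sqrt (r / qf A y) • y, ?_, ?_⟩
      · rw [qf_smul, Real.sq_sqrt (by positivity : (0:ℝ) ≤ r / qf A y)]
        exact div_mul_cancel₀ r hax.ne'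
      · rw [qf_smul, hby, mul_zero]
    · have hax : 0 < qf A x := lt_of_lt_of_le h0 h2
      refine ⟨Real.sqrt (r / qf A x) • x, ?_, ?_⟩
      · rw [qf_smul, Real.sq_sqrt (by positivity : (0:ℝ) ≤ r / qf A x)]
        exact div_mul_cancel₀ r hax.ne'
      · rw [qf_smul, hbx, mul_zero]

lemma core_ne {n : ℕ} (A B : Matrix (Fin n) (Fin n) ℝ) (x y : Fin n → ℝ) (b r : ℝ)
    (hb : b ≠ 0) (hbx : qf B x = b) (hby : qf B y = b)
    (hβ : 0 ≤ (dotProduct x (B.mulVec y) + dotProduct y (B.mulVec x)) * b)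
    (hr : r ∈ Set.uIcc (qf A x) (qf A y)) :
    ∃ z, qf A z = r ∧ qf B z = b := by
  set β := dotProduct x (B.mulVec y) + dotProduct y (B.mulVec x) with hβdef
  set F : ℝ → (Fin n → ℝ) := fun θ =>
    Real.sqrt (b / (b + Real.sin θ * Real.cos θ * β)) • (Real.cos θ • x + Real.sin θ • y)
    with hF
  have pi_pos := Real.pi_pos
  -- facts on the interval
  have hsc : ∀ θ ∈ Set.Icc (0:ℝ) (Real.pi/2), 0 ≤ Real.sin θ * Real.cos θ := by
    intro θ hθ
    exact mul_nonneg (Real.sin_nonneg_of_nonneg_of_le_pi hθ.1 (by linarith [hθ.2]))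
      (Real.cos_nonneg_of_mem_Icc ⟨by linarith [hθ.1], hθ.2⟩)
  have hdb : ∀ θ ∈ Set.Icc (0:ℝ) (Real.pi/2),
      0 < (b + Real.sin θ * Real.cos θ * β) * b := by
    intro θ hθ
    have h1 := mul_nonneg (hsc θ hθ) hβ
    have h2 : 0 < b * b := mul_self_pos.mpr hb
    nlinarith
  have hd0 : ∀ θ ∈ Set.Icc (0:ℝ) (Real.pi/2), b + Real.sin θ * Real.cos θ * β ≠ 0 := by
    intro θ hθ h
    have := hdb θ hθ
    rw [h, zero_mul] at this
    exact lt_irrefl 0 this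
  have hqpos : ∀ θ ∈ Set.Icc (0:ℝ) (Real.pi/2),
      0 ≤ b / (b + Real.sin θ * Real.cos θ * β) := by
    intro θ hθ
    have h := hdb θ hθ
    rcases hb.lt_or_gt with hbneg | hbpos
    · have hd : b + Real.sin θ * Real.cos θ * β < 0 := by nlinarith
      exact le_of_lt (div_pos_of_neg_of_neg hbneg hd)
    · have hd : 0 < b + Real.sin θ * Real.cos θ * β := by nlinarith
      exact le_of_lt (div_pos hbpos hd)
  -- value of qf B along the path
  have keyB : ∀ θ ∈ Set.Icc (0:ℝ) (Real.pi/2), qf B (F θ) = b := by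
    intro θ hθ
    have pyth := Real.sin_sq_add_cos_sq θ
    rw [hF]
    simp only
    rw [qf_smul, qf_expand, Real.sq_sqrt (hqpos θ hθ), hbx, hby, ← hβdef]
    rw [div_mul_eq_mul_div, div_eq_iff (hd0 θ hθ)]
    linear_combination (b*b) * pyth
  -- endpoints
  have F0 : F 0 = x := by
    rw [hF]
    simp [div_self hb]
  have Fh : F (Real.pi/2) = y := by
    rw [hF]
    simp [div_self hb]
  -- continuity
  have hIcc : Set.uIcc (0:ℝ) (Real.pi/2) = Set.Icc 0 (Real.pi/2) :=
    Set.uIcc_of_le (by positivity)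
  have hcont : ContinuousOn (fun θ => qf A (F θ)) (Set.uIcc (0:ℝ) (Real.pi/2)) := by
    rw [hIcc]
    apply (qf_continuous A).comp_continuousOn
    rw [hF]
    apply ContinuousOn.fun_smul
    · apply Real.continuous_sqrt.comp_continuousOn
      exact ContinuousOn.div continuousOn_const (by fun_prop) (hd0)
    · exact Continuous.continuousOn (by fun_prop)
  have hr' : r ∈ Set.uIcc ((fun θ => qf A (F θ)) 0) ((fun θ => qf A (F θ)) (Real.pi/2)) := by
    simp only [F0, Fh]
    exact hr
  obtain ⟨θ, hθmem, hθr⟩ := intermediate_value_uIcc hcont hr'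
  exact ⟨F θ, hθr, keyB θ (hIcc ▸ hθmem)⟩

lemma conv_mem_uIcc (a b s t : ℝ) (hs : 0 ≤ s) (ht : 0 ≤ t) (hst : s + t = 1) :
    s * a + t * b ∈ Set.uIcc a b := by
  have hsa : s * a + t * a = a := by linear_combination a * hst
  have hsb : s * b + t * b = b := by linear_combination b * hst
  rcases le_total a b with h | h
  · rw [Set.uIcc_of_le h, Set.mem_Icc]
    have h1 := mul_nonneg ht (sub_nonneg.mpr h)
    have h2 := mul_nonneg hs (sub_nonneg.mpr h)
    constructor <;> nlinarith
  · rw [Set.uIcc_of_ge h, Set.mem_Icc]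
    have h1 := mul_nonneg ht (sub_nonneg.mpr h)
    have h2 := mul_nonneg hs (sub_nonneg.mpr h)
    constructor <;> nlinarith

lemma core {n : ℕ} (A B : Matrix (Fin n) (Fin n) ℝ) (x y : Fin n → ℝ) (b r : ℝ)
    (hbx : qf B x = b) (hby : qf B y = b)
    (hr : r ∈ Set.uIcc (qf A x) (qf A y)) :
    ∃ z, qf A z = r ∧ qf B z = b := by
  by_cases hb : b = 0
  · subst hb; exact core_zero A B x y r hbx hby hr
  · rcases le_or_gt 0 ((dotProduct x (B.mulVec y) + dotProduct y (B.mulVec x)) * b)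
      with h | h
    · exact core_ne A B x y b r hb hbx hby h hr
    · refine core_ne A B x ((-1:ℝ) • y) b r hb hbx ?_ ?_ ?_
      · rw [qf_smul, hby]; ring
      · simp only [Matrix.mulVec_smul, dotProduct_smul, smul_dotProduct,
          smul_eq_mul]
        nlinarith
      · rw [qf_smul]
        simpa using hr

theorem dines_convexity (n : ℕ) (f g : (Fin n → ℝ) → ℝ)
    (A B : Matrix (Fin n) (Fin n) ℝ) (hA : A.IsSymm) (hB : B.IsSymm)
    (hf : ∀ x, f x = dotProduct x (A.mulVec x))
    (hg : ∀ x, g x = dotProduct x (B.mulVec x)) :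
    Convex ℝ {p : ℝ × ℝ | ∃ x : Fin n → ℝ, p = (f x, g x)} := by
  intro p hp q hq s t hs ht hst
  obtain ⟨u, rfl⟩ := hp
  obtain ⟨v, rfl⟩ := hq
  simp only [Set.mem_setOf_eq, Prod.smul_mk, Prod.mk_add_mk, smul_eq_mul, Prod.mk.injEq]
  have hfu : f u = qf A u := hf u
  have hfv : f v = qf A v := hf v
  have hgu : g u = qf B u := hg u
  have hgv : g v = qf B v := hg v
  set a1 := qf A u with ha1
  set a2 := qf A v with ha2
  set b1 := qf B u with hb1
  set b2 := qf B v with hb2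
  by_cases h12 : a2 = a1 ∧ b2 = b1
  · refine ⟨u, ?_, ?_⟩
    · rw [hfu, hfv, h12.1]; linear_combination a1 * hst
    · rw [hgu, hgv, h12.2]; linear_combination b1 * hst
  · set Δ₁ := a2 - a1 with hΔ₁
    set Δ₂ := b2 - b1 with hΔ₂
    have hΔpos : 0 < Δ₁^2 + Δ₂^2 := by
      rcases not_and_or.mp h12 with h | h
      · have : Δ₁ ≠ 0 := fun hc => h (by rw [hΔ₁] at hc; linarith)
        positivity
      · have : Δ₂ ≠ 0 := fun hc => h (by rw [hΔ₂] at hc; linarith)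
        positivity
    set A' := Δ₁ • A + Δ₂ • B with hA'
    set B' := Δ₂ • A + (-Δ₁) • B with hB'
    have hA'u : qf A' u = Δ₁ * a1 + Δ₂ * b1 := qf_lin A B Δ₁ Δ₂ u
    have hA'v : qf A' v = Δ₁ * a2 + Δ₂ * b2 := qf_lin A B Δ₁ Δ₂ v
    have hB'u : qf B' u = Δ₂ * a1 + (-Δ₁) * b1 := qf_lin A B Δ₂ (-Δ₁) u
    have hB'v : qf B' v = Δ₂ * a1 + (-Δ₁) * b1 := by
      rw [qf_lin A B Δ₂ (-Δ₁) v, hΔ₁, hΔ₂]; ring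
    set r := s * (Δ₁ * a1 + Δ₂ * b1) + t * (Δ₁ * a2 + Δ₂ * b2) with hrdef
    have hrmem : r ∈ Set.uIcc (qf A' u) (qf A' v) := by
      rw [hA'u, hA'v]
      exact conv_mem_uIcc _ _ s t hs ht hst
    obtain ⟨z, hzA, hzB⟩ := core A' B' u v (Δ₂ * a1 + (-Δ₁) * b1) r hB'u hB'v hrmem
    rw [qf_lin] at hzA hzB
    refine ⟨z, ?_, ?_⟩
    · rw [hfu, hfv, hf z]
      have key : (Δ₁^2 + Δ₂^2) * (qf A z - (s * a1 + t * a2)) = 0 := by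
        linear_combination Δ₁ * hzA + Δ₂ * hzB + (Δ₁*Δ₂*b1 - Δ₂^2*a1) * hst
      have := mul_eq_zero.mp key
      rcases this with h | h
      · exact absurd h (ne_of_gt hΔpos)
      · have : qf A z = s * a1 + t * a2 := by linarith
        rw [ha1, ha2] at this
        exact this.symm
    · rw [hgu, hgv, hg z]
      have key : (Δ₁^2 + Δ₂^2) * (qf B z - (s * b1 + t * b2)) = 0 := by
        linear_combination Δ₂ * hzA + (-Δ₁) * hzB + (Δ₁*Δ₂*a1 - Δ₁^2*b1) * hst
      have := mul_eq_zero.mp key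
      rcases this with h | h
      · exact absurd h (ne_of_gt hΔpos)
      · have : qf B z = s * b1 + t * b2 := by linarith
        rw [hb1, hb2] at this
        exact this.symm
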